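/- For each 0 ≤ j ≤ t−1 with ŝ_{j+1} < m, the EII code C contains a codeword of Hamming weight exactly d_j·(ŝ_{j+1}+1), where d_j is the minimum distance of C_j. -/

import Mathlib

/-- existence of low-weight codewords in an EII code.

Same EII context, with `d j` the minimum distance of `C j`.  For each `0 ≤ j ≤ t-1`
with `ŝ (j+1) < m`, the EII code contains a codeword of Hamming weight exactly
`d j · (ŝ (j+1) + 1)` (the codeword viewed as a vector of length `m·n`). -/
theorem stmt_5
    {F : Type*} [Field F] [Fintype F] [DecidableEq F]
    (n t : ℕ) (hn : 1 ≤ n) (ht : 1 ≤ t)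
    (C : ℕ → Submodule F (Fin n → F))
    (hCt : C t = ⊥)
    (hnest : ∀ i, i < t → C (i + 1) < C i)
    (s : ℕ → ℕ) (m : ℕ)
    (hm : m = ∑ i ∈ Finset.range (t + 1), s i) (hm1 : 1 ≤ m)
    (α : F) (hα : m ≤ orderOf α)
    (shat : ℕ → ℕ) (hshat : ∀ i, shat i = ∑ j ∈ Finset.Icc i t, s j)
    (d : ℕ → ℕ)
    (hd : ∀ j, j < t →
      IsLeast {w : ℕ | ∃ x ∈ C j, x ≠ 0 ∧ hammingNorm x = w} (d j)) :
    ∀ j, j < t → shat (j + 1) < m →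
      ∃ c : Fin m → Fin n → F,
        ((∀ j', c j' ∈ C 0) ∧ ∀ i, 1 ≤ i → i ≤ t → ∀ r, r < shat i →
            (∑ j' : Fin m, α ^ (r * (j' : ℕ)) • c j') ∈ C i) ∧
        hammingNorm (fun p : Fin m × Fin n => c p.1 p.2) = d j * (shat (j + 1) + 1) := by
  intro j hj hksm
  obtain ⟨⟨x, hxC, hx0, hxw⟩, -⟩ := hd j hj
  set k := shat (j + 1) with hkdef
  -- monotonicity of the chain of codes
  have hmono : ∀ a b : ℕ, a ≤ b → b ≤ t → C b ≤ C a := by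
    intro a b hab hbt
    induction b with
    | zero => simp [Nat.le_zero.mp hab]
    | succ b ih =>
      rcases Nat.lt_or_ge a (b + 1) with h | h
      · exact le_trans (le_of_lt (hnest b (by omega))) (ih (by omega) (by omega))
      · have : a = b + 1 := le_antisymm hab h
        simp [this]
  -- injectivity of powers of α below m
  have hpowinj : ∀ a b : ℕ, a < m → b < m → α ^ a = α ^ b → a = b := by
    have hu : IsUnit α := by
      exact IsUnit.of_pow_eq_one (pow_orderOf_eq_one α) (by omega)
    intro a b ha hb hab
    have hab' : hu.unit ^ a = hu.unit ^ b := by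
      apply Units.ext
      simpa using hab
    have := pow_eq_pow_iff_modEq.mp hab'
    have h1 : a % orderOf (hu.unit) = b % orderOf (hu.unit) := this
    rw [show orderOf hu.unit = orderOf α from by rw [← orderOf_units, IsUnit.unit_spec]] at h1
    rwa [Nat.mod_eq_of_lt (by omega), Nat.mod_eq_of_lt (by omega)] at h1
  -- a nonzero kernel vector of the (k) × (k+1) Vandermonde matrix
  have hker : ∃ v : Fin (k + 1) → F, v ≠ 0 ∧
      ∀ r : ℕ, r < k → ∑ p : Fin (k + 1), α ^ (r * (p : ℕ)) * v p = 0 := by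
    set M : Matrix (Fin k) (Fin (k + 1)) F :=
      Matrix.of fun (r : Fin k) (p : Fin (k + 1)) => α ^ ((r : ℕ) * (p : ℕ)) with hM
    have hnotinj : ¬ Function.Injective M.mulVecLin := by
      intro h
      have := LinearMap.finrank_le_finrank_of_injective h
      rw [Module.finrank_fin_fun, Module.finrank_fin_fun] at this
      omega
    rw [Function.not_injective_iff] at hnotinj
    obtain ⟨a, b, hab, hne⟩ := hnotinj
    refine ⟨a - b, sub_ne_zero.mpr hne, ?_⟩
    intro r hr
    have h0 : M.mulVecLin (a - b) = 0 := by rw [map_sub, hab, sub_self]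
    have := congrFun h0 ⟨r, hr⟩
    simpa [Matrix.mulVecLin, Matrix.mulVec, dotProduct, hM, mul_comm, mul_sub, Finset.sum_sub_distrib] using this
  obtain ⟨v, hv0, hvker⟩ := hker
  -- all entries of v are nonzero
  have hvnz : ∀ p : Fin (k + 1), v p ≠ 0 := by
    intro p hp
    apply hv0
    have hze : (fun q : Fin k => v (p.succAbove q)) = 0 := by
      apply Matrix.eq_zero_of_forall_pow_sum_mul_pow_eq_zero
        (f := fun q : Fin k => α ^ ((p.succAbove q : Fin (k+1)) : ℕ))
      · intro q q' hqq'
        have := hpowinj _ _ (by have := (p.succAbove q).is_lt; omega)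
          (by have := (p.succAbove q').is_lt; omega) hqq'
        exact Fin.succAbove_right_injective (Fin.ext this)
      · intro i
        have h1 := hvker (i : ℕ) i.is_lt
        rw [Fin.sum_univ_succAbove _ p] at h1
        rw [hp, mul_zero, zero_add] at h1
        rw [← h1]
        apply Finset.sum_congr rfl
        intro q _
        rw [← pow_mul, mul_comm ((p.succAbove q : Fin (k+1)) : ℕ) (i : ℕ), mul_comm]
    funext q
    rcases eq_or_ne q p with rfl | hqp
    · exact hp
    · obtain ⟨z, hz⟩ := Fin.exists_succAbove_eq hqp
      have h2 := congrFun hze z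
      simp only [Pi.zero_apply] at h2 ⊢
      rw [← hz]
      exact h2
  -- the coefficient vector on Fin m
  set lam : Fin m → F := fun j' => if h : (j' : ℕ) < k + 1 then v ⟨j', h⟩ else 0 with hlam
  refine ⟨fun j' => lam j' • x, ⟨?_, ?_⟩, ?_⟩
  · intro j'
    exact Submodule.smul_mem _ _ (hmono 0 j (Nat.zero_le _) (le_of_lt hj) hxC)
  · intro i hi1 hit r hr
    have hsum : (∑ j' : Fin m, α ^ (r * (j' : ℕ)) • lam j' • x)
        = (∑ j' : Fin m, α ^ (r * (j' : ℕ)) * lam j') • x := by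
      rw [Finset.sum_smul]
      exact Finset.sum_congr rfl fun j' _ => (smul_smul _ _ _)
    rw [hsum]
    rcases le_or_gt i j with hij | hij
    · exact Submodule.smul_mem _ _ (hmono i j hij (le_of_lt hj) hxC)
    · -- i ≥ j + 1, so shat i ≤ k, hence r < k and the scalar vanishes
      have hsk : shat i ≤ k := by
        rw [hshat, hkdef, hshat]
        exact Finset.sum_le_sum_of_subset (Finset.Icc_subset_Icc_left hij)
      have hrk : r < k := lt_of_lt_of_le hr hsk
      have hS : (∑ j' : Fin m, α ^ (r * (j' : ℕ)) * lam j') = 0 := by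
        have hrw : (∑ j' : Fin m, α ^ (r * (j' : ℕ)) * lam j')
            = ∑ p ∈ Finset.range m,
                (if h : p < k + 1 then α ^ (r * p) * v ⟨p, h⟩ else 0) := by
          rw [← Fin.sum_univ_eq_sum_range]
          apply Finset.sum_congr rfl
          intro j' _
          by_cases h : (j' : ℕ) ≤ k <;> simp [hlam, h]
        rw [hrw, ← Finset.sum_subset (Finset.range_subset_range.mpr (show k + 1 ≤ m by omega))
          (by intro p _ hp; rw [Finset.mem_range] at hp; simp [hp]),
          ← Fin.sum_univ_eq_sum_range
            (fun p => if h : p < k + 1 then α ^ (r * p) * v ⟨p, h⟩ else 0) (k + 1)]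
        have := hvker r hrk
        rw [← this]
        apply Finset.sum_congr rfl
        intro p _
        simp [p.is_lt]
      rw [hS, zero_smul]
      exact Submodule.zero_mem _
  · -- Hamming weight computation
    have hsupp : (Finset.univ.filter fun j' : Fin m => lam j' ≠ 0)
        = Finset.univ.filter fun j' : Fin m => (j' : ℕ) < k + 1 := by
      ext j'
      simp only [Finset.mem_filter, Finset.mem_univ, true_and]
      constructor
      · intro h
        by_contra hc
        simp [hlam, hc] at h
        obtain ⟨h1, -⟩ := h
        omega
      · intro h
        simp only [hlam, dif_pos h]
        exact hvnz _
    have hcard : (Finset.univ.filter fun j' : Fin m => (j' : ℕ) < k + 1).card = k + 1 := by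
      have : (Finset.univ.filter fun j' : Fin m => (j' : ℕ) < k + 1)
          = Finset.map (Fin.castLEEmb (show k + 1 ≤ m by omega)) Finset.univ := by
        ext j'
        simp only [Finset.mem_filter, Finset.mem_univ, true_and, Finset.mem_map,
          Fin.castLEEmb, Function.Embedding.coeFn_mk]
        constructor
        · intro h
          exact ⟨⟨(j' : ℕ), h⟩, Fin.ext rfl⟩
        · rintro ⟨a, rfl⟩
          exact a.is_lt
      rw [this, Finset.card_map, Finset.card_univ, Fintype.card_fin]
    have e1 : hammingNorm (fun p : Fin m × Fin n => (fun j' => lam j' • x) p.1 p.2)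
        = ((Finset.univ.filter fun a : Fin m => lam a ≠ 0)
            ×ˢ (Finset.univ.filter fun b : Fin n => x b ≠ 0)).card := by
      unfold hammingNorm
      congr 1
      ext p
      simp only [Finset.mem_filter, Finset.mem_univ, true_and, Finset.mem_product,
        Pi.smul_apply, smul_eq_mul, ne_eq, mul_eq_zero, not_or]
    rw [e1, Finset.card_product, hsupp, hcard]
    have e2 : (Finset.univ.filter fun b : Fin n => x b ≠ 0).card = hammingNorm x := by
      rfl
    rw [e2, hxw, mul_comm]
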